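/- If W̃₁ is a Darboux transformation of W₁ and W̃₂ is a Darboux transformation of W₂, then W̃₁ ⊕ W̃₂ is a Darboux transformation of W₁ ⊕ W₂. -/

import Mathlib

open Polynomial Matrix MeasureTheory
open scoped ComplexOrder

/-- Matrix polynomials: square matrices with polynomial entries. -/
abbrev MatP (n : Type*) := Matrix n n (Polynomial ℂ)

section MatFramework
variable {n : Type*} [Fintype n] [DecidableEq n]

/-- Entrywise `j`-th derivative of a matrix polynomial. -/
noncomputable def derivIter (j : ℕ) (P : MatP n) : MatP n :=
  P.map (fun p => Polynomial.derivative^[j] p)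

/-- Right action of the differential operator `∑_j ∂^j F j` on a matrix polynomial:
`P · D = ∑_j P^{(j)} F_j`. -/
noncomputable def actOp (F : ℕ →₀ MatP n) (P : MatP n) : MatP n :=
  F.sum fun j Fj => derivIter j P * Fj

/-- A map on matrix polynomials is a matrix differential operator with polynomial
coefficients if it is given by some `∑_j ∂^j F_j`. -/
def IsDiffOp (L : MatP n → MatP n) : Prop :=
  ∃ F : ℕ →₀ MatP n, ∀ P, L P = actOp F P

/-- Degree of a matrix polynomial: the sup of the degrees of its entries. -/
noncomputable def matDeg (P : MatP n) : WithBot ℕ :=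
  Finset.univ.sup fun ij : n × n => (P ij.1 ij.2).degree

/-- A differential operator is degree-preserving if `deg (P · V) = deg P` for all `P`. -/
def DegPres (L : MatP n → MatP n) : Prop :=
  IsDiffOp L ∧ ∀ P, matDeg (L P) = matDeg P

/-- Natural-number degree of a matrix polynomial. -/
noncomputable def matNatDeg (P : MatP n) : ℕ :=
  Finset.univ.sup fun ij : n × n => (P ij.1 ij.2).natDegree

/-- Leading coefficient of a matrix polynomial. -/
noncomputable def matLead (P : MatP n) : Matrix n n ℂ :=
  Matrix.of fun i j => (P i j).coeff (matNatDeg P)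

/-- Evaluation of a matrix polynomial at a real point. -/
noncomputable def evalMP (P : MatP n) (x : ℝ) : Matrix n n ℂ :=
  Matrix.of fun i j => (P i j).eval (x : ℂ)

/-- The matrix-valued inner product `⟨P,Q⟩ = ∫_S P(x) W(x) Q(x)^* dx`. -/
noncomputable def wInner (S : Set ℝ) (W : ℝ → Matrix n n ℂ) (P Q : MatP n) :
    Matrix n n ℂ :=
  Matrix.of fun i j => ∫ x in S, (evalMP P x * W x * (evalMP Q x)ᴴ) i j

/-- `W` is a weight matrix supported on `S`: positive definite on `S` with finite moments. -/
def IsWeight (S : Set ℝ) (W : ℝ → Matrix n n ℂ) : Prop :=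
  MeasurableSet S ∧ volume S ≠ 0 ∧ (∀ x ∈ S, (W x).PosDef) ∧
  ∀ (k : ℕ) (i j : n), IntegrableOn (fun x => ‖W x i j‖ * |x| ^ k) S

/-- `P` is the sequence of monic orthogonal matrix polynomials for the weight `W` on `S`. -/
def MonicOPS (S : Set ℝ) (W : ℝ → Matrix n n ℂ) (P : ℕ → MatP n) : Prop :=
  (∀ k, matNatDeg (P k) = k) ∧
  (∀ k, (Matrix.of fun i j => ((P k) i j).coeff k) = (1 : Matrix n n ℂ)) ∧
  (∀ k l, k ≠ l → wInner S W (P k) (P l) = 0)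

/-- Membership in the algebra `D(W)`: a differential operator having the (monic orthogonal)
polynomials `P_k` as eigenfunctions with matrix eigenvalues. -/
def InDW (P : ℕ → MatP n) (L : MatP n → MatP n) : Prop :=
  IsDiffOp L ∧ ∀ k, ∃ Λ : Matrix n n ℂ, L (P k) = Λ.map Polynomial.C * P k

/-- `Pt` (the monic OPS of `W̃`) is obtained from `P` (the monic OPS of `W`) by a Darboux
transformation: some `D = V N ∈ D(W)` with `V, N` degree-preserving and
`P_k · V = A_k P̃_k`, `A_k` nonsingular. -/
def IsDarbouxPair (P Pt : ℕ → MatP n) : Prop :=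
  ∃ V Nd : MatP n → MatP n, DegPres V ∧ DegPres Nd ∧
    InDW P (fun Q => Nd (V Q)) ∧
    ∀ k, ∃ A : Matrix n n ℂ, IsUnit A ∧ V (P k) = A.map Polynomial.C * Pt k

end MatFramework

section AuxRow
variable {n : Type*} [Fintype n]

/-- Row-wise action of a differential operator. -/
noncomputable def rowAct (F : ℕ →₀ MatP n) (v : n → Polynomial ℂ) : n → Polynomial ℂ :=
  fun j => F.sum fun m Fm => ∑ k, (Polynomial.derivative^[m] (v k)) * Fm k j

noncomputable def rowDeg (v : n → Polynomial ℂ) : WithBot ℕ :=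
  Finset.univ.sup fun j => (v j).degree

lemma actOp_row (F : ℕ →₀ MatP n) (P : MatP n) (i : n) :
    actOp F P i = rowAct F (P i) := by
  funext j
  unfold actOp rowAct derivIter
  rw [Finsupp.sum, Finsupp.sum]
  rw [Matrix.sum_apply]
  refine Finset.sum_congr rfl fun m _ => ?_
  rw [Matrix.mul_apply]
  rfl

lemma rowAct_zero (F : ℕ →₀ MatP n) : rowAct F (fun _ => 0) = fun _ => 0 := by
  funext j
  unfold rowAct
  rw [Finsupp.sum]
  refine Finset.sum_eq_zero fun m _ => Finset.sum_eq_zero fun k _ => ?_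
  rw [Function.iterate_fixed (map_zero Polynomial.derivative) m, zero_mul]

lemma matDeg_eq_sup_rows (P : MatP n) :
    matDeg P = Finset.univ.sup fun i => rowDeg (P i) := by
  unfold matDeg rowDeg
  rw [← Finset.univ_product_univ, Finset.sup_product_left]

lemma matDeg_const_rows (v : n → Polynomial ℂ) :
    matDeg (Matrix.of fun _ j => v j) = rowDeg v := by
  rw [matDeg_eq_sup_rows]
  rcases isEmpty_or_nonempty n with h | h
  · rw [Finset.univ_eq_empty (α := n), Finset.sup_empty]
    unfold rowDeg
    rw [Finset.univ_eq_empty, Finset.sup_empty]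
  · exact Finset.sup_const Finset.univ_nonempty (rowDeg v)

lemma transfer_eq {φ ψ : (n → Polynomial ℂ) → (n → Polynomial ℂ)}
    (h : ∀ (P : MatP n) (i : n), φ (P i) = ψ (P i)) (v : n → Polynomial ℂ) :
    φ v = ψ v := by
  rcases isEmpty_or_nonempty n with hn | hn
  · funext j; exact hn.elim j
  · obtain ⟨i₀⟩ := hn
    have := h (Matrix.of fun _ j => v j) i₀
    exact this

lemma transfer_deg (F : ℕ →₀ MatP n)
    (h : ∀ P : MatP n, matDeg (actOp F P) = matDeg P) (v : n → Polynomial ℂ) :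
    rowDeg (rowAct F v) = rowDeg v := by
  have key := h (Matrix.of fun _ j => v j)
  have hrows : actOp F (Matrix.of fun _ j => v j) = Matrix.of fun _ j => rowAct F v j := by
    funext i j
    have := actOp_row F (Matrix.of fun _ j => v j) i
    calc actOp F (Matrix.of fun _ j => v j) i j = rowAct F v j := by rw [this]; rfl
      _ = _ := rfl
  rw [hrows, matDeg_const_rows, matDeg_const_rows] at key
  exact key

end AuxRow

section AuxBlock
variable {n₁ n₂ : Type*} [Fintype n₁] [DecidableEq n₁] [Fintype n₂] [DecidableEq n₂]

/-- Block-diagonal direct sum of the coefficients of two differential operators. -/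
noncomputable def bdF (F₁ : ℕ →₀ MatP n₁) (F₂ : ℕ →₀ MatP n₂) : ℕ →₀ MatP (n₁ ⊕ n₂) :=
  F₁.mapRange (fun A => Matrix.fromBlocks A 0 0 0) (by simp) +
  F₂.mapRange (fun B => Matrix.fromBlocks 0 0 0 B) (by simp)

lemma rowAct_bdF_inl (F₁ : ℕ →₀ MatP n₁) (F₂ : ℕ →₀ MatP n₂)
    (v : n₁ ⊕ n₂ → Polynomial ℂ) (j : n₁) :
    rowAct (bdF F₁ F₂) v (Sum.inl j) = rowAct F₁ (v ∘ Sum.inl) j := by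
  unfold rowAct bdF
  rw [Finsupp.sum_add_index' (fun m => by simp) (fun m A B => by
    simp [Matrix.add_apply, Finset.sum_add_distrib, mul_add])]
  rw [Finsupp.sum_mapRange_index (fun m => by simp), Finsupp.sum_mapRange_index (fun m => by simp)]
  have h2 : (F₂.sum fun m Fm =>
      ∑ k, (Polynomial.derivative^[m] (v k)) * (Matrix.fromBlocks 0 0 0 Fm : MatP (n₁ ⊕ n₂)) k (Sum.inl j)) = 0 := by
    rw [Finsupp.sum]
    refine Finset.sum_eq_zero fun m _ => Finset.sum_eq_zero fun k _ => ?_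
    rcases k with k | k <;> simp [Matrix.fromBlocks]
  rw [h2, add_zero]
  refine Finsupp.sum_congr fun m _ => ?_
  rw [Fintype.sum_sum_type]
  have h3 : (∑ k : n₂, (Polynomial.derivative^[m] (v (Sum.inr k))) *
      (Matrix.fromBlocks (F₁ m) 0 0 0 : MatP (n₁ ⊕ n₂)) (Sum.inr k) (Sum.inl j)) = 0 := by
    refine Finset.sum_eq_zero fun k _ => by simp [Matrix.fromBlocks]
  rw [h3, add_zero]
  refine Finset.sum_congr rfl fun k _ => by simp [Matrix.fromBlocks]

lemma rowAct_bdF_inr (F₁ : ℕ →₀ MatP n₁) (F₂ : ℕ →₀ MatP n₂)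
    (v : n₁ ⊕ n₂ → Polynomial ℂ) (j : n₂) :
    rowAct (bdF F₁ F₂) v (Sum.inr j) = rowAct F₂ (v ∘ Sum.inr) j := by
  unfold rowAct bdF
  rw [Finsupp.sum_add_index' (fun m => by simp) (fun m A B => by
    simp [Matrix.add_apply, Finset.sum_add_distrib, mul_add])]
  rw [Finsupp.sum_mapRange_index (fun m => by simp), Finsupp.sum_mapRange_index (fun m => by simp)]
  have h1 : (F₁.sum fun m Fm =>
      ∑ k, (Polynomial.derivative^[m] (v k)) * (Matrix.fromBlocks Fm 0 0 0 : MatP (n₁ ⊕ n₂)) k (Sum.inr j)) = 0 := by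
    rw [Finsupp.sum]
    refine Finset.sum_eq_zero fun m _ => Finset.sum_eq_zero fun k _ => ?_
    rcases k with k | k <;> simp [Matrix.fromBlocks]
  rw [h1, zero_add]
  refine Finsupp.sum_congr fun m _ => ?_
  rw [Fintype.sum_sum_type]
  have h3 : (∑ k : n₁, (Polynomial.derivative^[m] (v (Sum.inl k))) *
      (Matrix.fromBlocks 0 0 0 (F₂ m) : MatP (n₁ ⊕ n₂)) (Sum.inl k) (Sum.inr j)) = 0 := by
    refine Finset.sum_eq_zero fun k _ => by simp [Matrix.fromBlocks]
  rw [h3, zero_add]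
  refine Finset.sum_congr rfl fun k _ => by simp [Matrix.fromBlocks]

lemma rowDeg_sum (v : n₁ ⊕ n₂ → Polynomial ℂ) :
    rowDeg v = max (rowDeg (v ∘ Sum.inl)) (rowDeg (v ∘ Sum.inr)) := by
  unfold rowDeg
  rw [← Finset.univ_disjSum_univ, ← Finset.map_inl_disjUnion_map_inr,
    Finset.disjUnion_eq_union, Finset.sup_union, Finset.sup_map, Finset.sup_map]
  rfl

lemma actOp_bdF_fromBlocks (F₁ : ℕ →₀ MatP n₁) (F₂ : ℕ →₀ MatP n₂)
    (A : MatP n₁) (B : MatP n₂) :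
    actOp (bdF F₁ F₂) (Matrix.fromBlocks A 0 0 B) =
      Matrix.fromBlocks (actOp F₁ A) 0 0 (actOp F₂ B) := by
  funext i j
  rcases i with i | i <;> rcases j with j | j
  · rw [show actOp (bdF F₁ F₂) (Matrix.fromBlocks A 0 0 B) (Sum.inl i) (Sum.inl j)
        = rowAct (bdF F₁ F₂) ((Matrix.fromBlocks A 0 0 B) (Sum.inl i)) (Sum.inl j) from
        congrFun (actOp_row _ _ _) _, rowAct_bdF_inl]
    rw [show ((Matrix.fromBlocks A 0 0 B) (Sum.inl i)) ∘ Sum.inl = A i from rfl]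
    exact (congrFun (actOp_row F₁ A i) j).symm
  · rw [show actOp (bdF F₁ F₂) (Matrix.fromBlocks A 0 0 B) (Sum.inl i) (Sum.inr j)
        = rowAct (bdF F₁ F₂) ((Matrix.fromBlocks A 0 0 B) (Sum.inl i)) (Sum.inr j) from
        congrFun (actOp_row _ _ _) _, rowAct_bdF_inr]
    rw [show ((Matrix.fromBlocks A 0 0 B) (Sum.inl i)) ∘ Sum.inr = fun _ => 0 from rfl]
    rw [rowAct_zero]
    rfl
  · rw [show actOp (bdF F₁ F₂) (Matrix.fromBlocks A 0 0 B) (Sum.inr i) (Sum.inl j)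
        = rowAct (bdF F₁ F₂) ((Matrix.fromBlocks A 0 0 B) (Sum.inr i)) (Sum.inl j) from
        congrFun (actOp_row _ _ _) _, rowAct_bdF_inl]
    rw [show ((Matrix.fromBlocks A 0 0 B) (Sum.inr i)) ∘ Sum.inl = fun _ => 0 from rfl]
    rw [rowAct_zero]
    rfl
  · rw [show actOp (bdF F₁ F₂) (Matrix.fromBlocks A 0 0 B) (Sum.inr i) (Sum.inr j)
        = rowAct (bdF F₁ F₂) ((Matrix.fromBlocks A 0 0 B) (Sum.inr i)) (Sum.inr j) from
        congrFun (actOp_row _ _ _) _, rowAct_bdF_inr]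
    rw [show ((Matrix.fromBlocks A 0 0 B) (Sum.inr i)) ∘ Sum.inr = B i from rfl]
    exact (congrFun (actOp_row F₂ B i) j).symm

lemma degPres_bdF (F₁ : ℕ →₀ MatP n₁) (F₂ : ℕ →₀ MatP n₂)
    (h₁ : ∀ P : MatP n₁, matDeg (actOp F₁ P) = matDeg P)
    (h₂ : ∀ P : MatP n₂, matDeg (actOp F₂ P) = matDeg P)
    (P : MatP (n₁ ⊕ n₂)) : matDeg (actOp (bdF F₁ F₂) P) = matDeg P := by
  rw [matDeg_eq_sup_rows, matDeg_eq_sup_rows]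
  refine Finset.sup_congr rfl fun i _ => ?_
  rw [actOp_row, rowDeg_sum, rowDeg_sum (P i)]
  congr 1
  · rw [show (rowAct (bdF F₁ F₂) (P i)) ∘ Sum.inl = rowAct F₁ ((P i) ∘ Sum.inl) from
      funext fun j => rowAct_bdF_inl F₁ F₂ (P i) j]
    exact transfer_deg F₁ h₁ _
  · rw [show (rowAct (bdF F₁ F₂) (P i)) ∘ Sum.inr = rowAct F₂ ((P i) ∘ Sum.inr) from
      funext fun j => rowAct_bdF_inr F₁ F₂ (P i) j]
    exact transfer_deg F₂ h₂ _

end AuxBlock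
section AuxComp
variable {n : Type*} [Fintype n]

lemma row_comp (F G D : ℕ →₀ MatP n)
    (h : ∀ P : MatP n, actOp G (actOp F P) = actOp D P) (v : n → Polynomial ℂ) :
    rowAct G (rowAct F v) = rowAct D v :=
  transfer_eq (φ := fun v => rowAct G (rowAct F v)) (ψ := rowAct D)
    (fun P i => by show rowAct G (rowAct F (P i)) = rowAct D (P i)
                   rw [← actOp_row, ← actOp_row, h, actOp_row]) v

end AuxComp

section AuxComp2
variable {n₁ n₂ : Type*} [Fintype n₁] [DecidableEq n₁] [Fintype n₂] [DecidableEq n₂]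

lemma actOp_bdF_comp (F₁ G₁ D₁ : ℕ →₀ MatP n₁) (F₂ G₂ D₂ : ℕ →₀ MatP n₂)
    (h₁ : ∀ P : MatP n₁, actOp G₁ (actOp F₁ P) = actOp D₁ P)
    (h₂ : ∀ P : MatP n₂, actOp G₂ (actOp F₂ P) = actOp D₂ P)
    (Q : MatP (n₁ ⊕ n₂)) :
    actOp (bdF G₁ G₂) (actOp (bdF F₁ F₂) Q) = actOp (bdF D₁ D₂) Q := by
  funext i j
  have hrow : (actOp (bdF F₁ F₂) Q) i = rowAct (bdF F₁ F₂) (Q i) := actOp_row _ _ _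
  have lhs : actOp (bdF G₁ G₂) (actOp (bdF F₁ F₂) Q) i j
      = rowAct (bdF G₁ G₂) (rowAct (bdF F₁ F₂) (Q i)) j := by
    rw [show actOp (bdF G₁ G₂) (actOp (bdF F₁ F₂) Q) i
        = rowAct (bdF G₁ G₂) ((actOp (bdF F₁ F₂) Q) i) from actOp_row _ _ _, hrow]
  have rhs : actOp (bdF D₁ D₂) Q i j = rowAct (bdF D₁ D₂) (Q i) j := by
    rw [actOp_row]
  rw [lhs, rhs]
  rcases j with j | j
  · rw [rowAct_bdF_inl, rowAct_bdF_inl,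
      show (rowAct (bdF F₁ F₂) (Q i)) ∘ Sum.inl = rowAct F₁ ((Q i) ∘ Sum.inl) from
        funext fun k => rowAct_bdF_inl F₁ F₂ (Q i) k,
      row_comp F₁ G₁ D₁ h₁]
  · rw [rowAct_bdF_inr, rowAct_bdF_inr,
      show (rowAct (bdF F₁ F₂) (Q i)) ∘ Sum.inr = rowAct F₂ ((Q i) ∘ Sum.inr) from
        funext fun k => rowAct_bdF_inr F₁ F₂ (Q i) k,
      row_comp F₂ G₂ D₂ h₂]

end AuxComp2

theorem stmt7' {n₁ n₂ : Type*} [Fintype n₁] [DecidableEq n₁] [Fintype n₂] [DecidableEq n₂]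
    (P₁ Pt₁ : ℕ → MatP n₁) (P₂ Pt₂ : ℕ → MatP n₂)
    (h₁ : IsDarbouxPair P₁ Pt₁) (h₂ : IsDarbouxPair P₂ Pt₂) :
    IsDarbouxPair (fun k => Matrix.fromBlocks (P₁ k) 0 0 (P₂ k))
      (fun k => Matrix.fromBlocks (Pt₁ k) 0 0 (Pt₂ k)) := by
  obtain ⟨V₁, N₁, ⟨⟨F₁, hF₁⟩, hdV₁⟩, ⟨⟨G₁, hG₁⟩, hdN₁⟩, ⟨⟨D₁, hD₁⟩, hE₁⟩, hA₁⟩ := h₁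
  obtain ⟨V₂, N₂, ⟨⟨F₂, hF₂⟩, hdV₂⟩, ⟨⟨G₂, hG₂⟩, hdN₂⟩, ⟨⟨D₂, hD₂⟩, hE₂⟩, hA₂⟩ := h₂
  refine ⟨actOp (bdF F₁ F₂), actOp (bdF G₁ G₂), ⟨⟨bdF F₁ F₂, fun _ => rfl⟩, ?_⟩,
    ⟨⟨bdF G₁ G₂, fun _ => rfl⟩, ?_⟩, ⟨⟨bdF D₁ D₂, ?_⟩, ?_⟩, ?_⟩
  · exact degPres_bdF F₁ F₂ (fun P => by rw [← hF₁]; exact hdV₁ P)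
      (fun P => by rw [← hF₂]; exact hdV₂ P)
  · exact degPres_bdF G₁ G₂ (fun P => by rw [← hG₁]; exact hdN₁ P)
      (fun P => by rw [← hG₂]; exact hdN₂ P)
  · exact actOp_bdF_comp F₁ G₁ D₁ F₂ G₂ D₂
      (fun P => by rw [← hF₁, ← hG₁]; exact hD₁ P) (fun P => by rw [← hF₂, ← hG₂]; exact hD₂ P)
  · intro k
    obtain ⟨Λ₁, hΛ₁⟩ := hE₁ k
    obtain ⟨Λ₂, hΛ₂⟩ := hE₂ k
    have hΛ₁' : N₁ (V₁ (P₁ k)) = Λ₁.map Polynomial.C * P₁ k := hΛ₁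
    have hΛ₂' : N₂ (V₂ (P₂ k)) = Λ₂.map Polynomial.C * P₂ k := hΛ₂
    refine ⟨Matrix.fromBlocks Λ₁ 0 0 Λ₂, ?_⟩
    show actOp (bdF G₁ G₂) (actOp (bdF F₁ F₂) (Matrix.fromBlocks (P₁ k) 0 0 (P₂ k)))
      = (Matrix.fromBlocks Λ₁ 0 0 Λ₂).map Polynomial.C * Matrix.fromBlocks (P₁ k) 0 0 (P₂ k)
    rw [actOp_bdF_fromBlocks, ← hF₁, ← hF₂, actOp_bdF_fromBlocks, ← hG₁, ← hG₂, hΛ₁', hΛ₂']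
    rw [Matrix.fromBlocks_map, Matrix.fromBlocks_multiply]
    simp [Matrix.map_zero _ Polynomial.C_0]
  · intro k
    obtain ⟨A₁, hu₁, hVA₁⟩ := hA₁ k
    obtain ⟨A₂, hu₂, hVA₂⟩ := hA₂ k
    refine ⟨Matrix.fromBlocks A₁ 0 0 A₂, ?_, ?_⟩
    · obtain ⟨B₁, hB₁, hB₁'⟩ := isUnit_iff_exists.mp hu₁
      obtain ⟨B₂, hB₂, hB₂'⟩ := isUnit_iff_exists.mp hu₂
      refine isUnit_iff_exists.mpr ⟨Matrix.fromBlocks B₁ 0 0 B₂, ?_, ?_⟩ <;>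
        simp [Matrix.fromBlocks_multiply, hB₁, hB₂, hB₁', hB₂', ← Matrix.fromBlocks_one]
    · show actOp (bdF F₁ F₂) (Matrix.fromBlocks (P₁ k) 0 0 (P₂ k))
        = (Matrix.fromBlocks A₁ 0 0 A₂).map Polynomial.C * Matrix.fromBlocks (Pt₁ k) 0 0 (Pt₂ k)
      rw [actOp_bdF_fromBlocks, ← hF₁, ← hF₂, hVA₁, hVA₂,
        Matrix.fromBlocks_map, Matrix.fromBlocks_multiply]
      simp [Matrix.map_zero _ Polynomial.C_0]
/-- If `W̃₁` is a Darboux transformation of `W₁` and `W̃₂` of `W₂`, then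
`W̃₁ ⊕ W̃₂` is a Darboux transformation of `W₁ ⊕ W₂` (whose monic orthogonal polynomials
are the block-diagonal sums of those of the summands). -/
theorem stmt7 {n₁ n₂ : Type*} [Fintype n₁] [DecidableEq n₁] [Fintype n₂] [DecidableEq n₂]
    (S : Set ℝ)
    (W₁ Wt₁ : ℝ → Matrix n₁ n₁ ℂ) (W₂ Wt₂ : ℝ → Matrix n₂ n₂ ℂ)
    (hW₁ : IsWeight S W₁) (hWt₁ : IsWeight S Wt₁)
    (hW₂ : IsWeight S W₂) (hWt₂ : IsWeight S Wt₂)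
    (P₁ Pt₁ : ℕ → MatP n₁) (P₂ Pt₂ : ℕ → MatP n₂)
    (hP₁ : MonicOPS S W₁ P₁) (hPt₁ : MonicOPS S Wt₁ Pt₁)
    (hP₂ : MonicOPS S W₂ P₂) (hPt₂ : MonicOPS S Wt₂ Pt₂)
    (h₁ : IsDarbouxPair P₁ Pt₁) (h₂ : IsDarbouxPair P₂ Pt₂) :
    IsDarbouxPair (fun k => Matrix.fromBlocks (P₁ k) 0 0 (P₂ k))
      (fun k => Matrix.fromBlocks (Pt₁ k) 0 0 (Pt₂ k)) := by
  exact stmt7' P₁ Pt₁ P₂ Pt₂ h₁ h₂
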